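/- Let E1, …, E_{k-1} be self-adjoint d×d complex matrices and set E_k := I - E1 - … - E_{k-1}. Then {E1, …, E_k} is a POVM (i.e., E_i ≥ 0 for all i ∈ [k-1] and Σ_{i=1}^{k-1} E_i ≤ I) if and only if the polytope D_{jewel,k}(1) ⊆ ℝ^{k-1} with extreme points -(k/2)e_i (i ∈ [k-1]) and (k/2)(1,…,1) is contained in the set {x ∈ ℝ^{k-1} : Σ_{i=1}^{k-1} x_i (2E_i - (2/k)I) ≤ I}. -/

import Mathlib

open Matrix
open scoped ComplexOrder

/-- The matrix jewel base at level 1: the polytope in `ℝ^{k-1}` with extreme points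
`-(k/2)eᵢ` for `i ∈ [k-1]` and `(k/2)(1,…,1)`. -/
def jewelBase (k : ℕ) : Set (Fin (k - 1) → ℝ) :=
  convexHull ℝ
    ((Set.range fun i : Fin (k - 1) =>
        (fun j => if j = i then -((k : ℝ) / 2) else 0 : Fin (k - 1) → ℝ))
      ∪ {fun _ => (k : ℝ) / 2})

lemma psd_real_smul {d : ℕ} {M : Matrix (Fin d) (Fin d) ℂ} (hM : M.PosSemidef)
    {c : ℝ} (hc : 0 ≤ c) : ((c : ℂ) • M).PosSemidef := by
  refine posSemidef_iff_dotProduct_mulVec.mpr ⟨?_, ?_⟩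
  · unfold Matrix.IsHermitian
    rw [conjTranspose_smul, hM.1.eq]
    congr 1
    simp
  · intro x
    rw [smul_mulVec, dotProduct_smul, smul_eq_mul]
    exact mul_nonneg (by exact_mod_cast Complex.zero_le_real.mpr hc) (hM.dotProduct_mulVec_nonneg x)

/-- For self-adjoint `E₁, …, E_{k-1}` with `E_k := I - E₁ - … - E_{k-1}`, the family
`{E₁, …, E_k}` is a POVM iff the jewel base polytope is contained in
`{x : ∑ᵢ xᵢ (2Eᵢ - (2/k)I) ≤ I}`. -/
theorem stmt_4 {d k : ℕ} (hk : 2 ≤ k)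
    (E : Fin (k - 1) → Matrix (Fin d) (Fin d) ℂ) (hE : ∀ i, (E i).IsHermitian) :
    ((∀ i, (E i).PosSemidef) ∧ ((1 : Matrix (Fin d) (Fin d) ℂ) - ∑ i, E i).PosSemidef)
      ↔ jewelBase k ⊆
          {x : Fin (k - 1) → ℝ |
            ((1 : Matrix (Fin d) (Fin d) ℂ)
              - ∑ i, (x i : ℂ) • ((2 : ℂ) • E i - ((2 : ℂ) / k) • 1)).PosSemidef} := by
  have hk0 : (k : ℂ) ≠ 0 := Nat.cast_ne_zero.mpr (by omega)
  set M : Fin (k - 1) → Matrix (Fin d) (Fin d) ℂ :=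
    fun i => (2 : ℂ) • E i - ((2 : ℂ) / k) • 1 with hM
  set A : (Fin (k - 1) → ℝ) → Matrix (Fin d) (Fin d) ℂ :=
    fun x => (1 : Matrix (Fin d) (Fin d) ℂ) - ∑ i, (x i : ℂ) • M i with hA
  -- value at vertex -(k/2) e_i
  have hAe : ∀ i, A (fun j => if j = i then -((k : ℝ) / 2) else 0) = (k : ℂ) • E i := by
    intro i
    have : ∑ j, (((if j = i then -((k : ℝ) / 2) else 0 : ℝ)) : ℂ) • M j
        = (-((k : ℂ) / 2)) • M i := by
      rw [Finset.sum_eq_single i]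
      · simp
      · intro j _ hj; simp [hj]
      · simp
    simp only [hA]
    rw [this]
    simp only [hM]
    rw [smul_sub, smul_smul, smul_smul]
    have h1 : -((k : ℂ) / 2) * (2 / k) = -1 := by field_simp
    have h2 : -((k : ℂ) / 2) * 2 = -k := by ring
    rw [h1, h2]
    match_scalars <;> ring
  -- value at vertex (k/2)(1,…,1)
  have hA1 : A (fun _ => (k : ℝ) / 2) = (k : ℂ) • (1 - ∑ i, E i) := by
    have hone : ∀ i : Fin (k - 1),
        ((((k : ℝ) / 2 : ℝ)) : ℂ) • M i = (k : ℂ) • E i - 1 := by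
      intro i
      simp only [hM, Complex.ofReal_div, Complex.ofReal_natCast, Complex.ofReal_ofNat]
      rw [smul_sub, smul_smul, smul_smul]
      have h1 : (k : ℂ) / 2 * (2 / k) = 1 := by field_simp
      have h2 : (k : ℂ) / 2 * 2 = k := by ring
      rw [h1, h2, one_smul]
    simp only [hA]
    rw [Finset.sum_congr rfl (fun i _ => hone i), Finset.sum_sub_distrib,
      Finset.sum_const, Finset.card_univ, Fintype.card_fin]
    have hc : ((k - 1 : ℕ) • (1 : Matrix (Fin d) (Fin d) ℂ)) = ((k : ℂ) - 1) • 1 := by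
      rw [Eq.symm (Nat.cast_smul_eq_nsmul ℂ _ _), Nat.cast_sub (by omega), Nat.cast_one]
    rw [hc, ← Finset.smul_sum]
    match_scalars <;> ring
  have hcastk : ((k : ℝ) : ℂ) = (k : ℂ) := by norm_cast
  -- dividing a PSD matrix by k
  have hinv : ∀ X : Matrix (Fin d) (Fin d) ℂ, ((k : ℂ) • X).PosSemidef → X.PosSemidef := by
    intro X hX
    have h2 := psd_real_smul hX (c := (k : ℝ)⁻¹) (by positivity)
    have h3 : (((k : ℝ)⁻¹ : ℝ) : ℂ) • ((k : ℂ) • X) = X := by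
      rw [smul_smul]
      push_cast
      rw [inv_mul_cancel₀ hk0, one_smul]
    rwa [h3] at h2
  constructor
  · rintro ⟨h1, h2⟩
    apply convexHull_min
    · rintro x (⟨i, rfl⟩ | rfl)
      · show ((A fun j => if j = i then -((k : ℝ) / 2) else 0)).PosSemidef
        rw [hAe i, ← hcastk]
        exact psd_real_smul (h1 i) (by positivity)
      · show (A fun _ => (k : ℝ) / 2).PosSemidef
        rw [hA1, ← hcastk]
        exact psd_real_smul h2 (by positivity)
    · intro a ha b hb s t hs ht hst
      show (A (s • a + t • b)).PosSemidef
      have key : A (s • a + t • b) = (s : ℂ) • A a + (t : ℂ) • A b := by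
        simp only [hA]
        have hsum : ∑ i, (((s • a + t • b) i : ℝ) : ℂ) • M i
            = (s : ℂ) • ∑ i, ((a i : ℝ) : ℂ) • M i
              + (t : ℂ) • ∑ i, ((b i : ℝ) : ℂ) • M i := by
          rw [Finset.smul_sum, Finset.smul_sum, ← Finset.sum_add_distrib]
          refine Finset.sum_congr rfl fun i _ => ?_
          simp only [Pi.add_apply, Pi.smul_apply, smul_eq_mul]
          push_cast
          rw [add_smul, smul_smul, smul_smul]
        rw [hsum]
        have hst' : (s : ℂ) + (t : ℂ) = 1 := by exact_mod_cast congrArg (Complex.ofReal) hst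
        rw [smul_sub, smul_sub]
        have hone : (s : ℂ) • (1 : Matrix (Fin d) (Fin d) ℂ) + (t : ℂ) • 1 = 1 := by
          rw [← add_smul, hst', one_smul]
        rw [← hone]
        match_scalars <;>
          first
            | ring1
            | linear_combination (-((s : ℂ) + t)) * hst'
      rw [key]
      exact ((psd_real_smul ha hs).add (psd_real_smul hb ht))
  · intro h
    constructor
    · intro i
      have hx : (fun j => if j = i then -((k : ℝ) / 2) else 0) ∈ jewelBase k :=
        subset_convexHull ℝ _ (Or.inl ⟨i, rfl⟩)
      have hpsd : ((A fun j => if j = i then -((k : ℝ) / 2) else 0)).PosSemidef := h hx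
      rw [hAe i] at hpsd
      exact hinv _ hpsd
    · have hx : (fun _ => (k : ℝ) / 2 : Fin (k - 1) → ℝ) ∈ jewelBase k :=
        subset_convexHull ℝ _ (Or.inr rfl)
      have hpsd : (A fun _ => (k : ℝ) / 2).PosSemidef := h hx
      rw [hA1] at hpsd
      exact hinv _ hpsd
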